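/- Post-processing preserves indistinguishability: let μ and ν be probability measures on a measurable space α, let κ be a Markov kernel from α to a measurable space β, and let ε, δ ≥ 0. If μ(S) ≤ e^ε·ν(S) + δ for every measurable S ⊆ α, then the pushforward measures satisfy (μ bind κ)(T) ≤ e^ε·(ν bind κ)(T) + δ for every measurable T ⊆ β, where (μ bind κ)(T) = ∫ κ(x)(T) dμ(x). -/

import Mathlib

open MeasureTheory ProbabilityTheory

/-- Post-processing preserves indistinguishability: if `μ S ≤ e^ε · ν S + δ` for every
measurable `S`, then for any Markov kernel `κ`, the pushforwards satisfy
`(μ bind κ) T ≤ e^ε · (ν bind κ) T + δ` for every measurable `T`. -/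
theorem postprocessing_preserves_indistinguishability
    {α β : Type*} [MeasurableSpace α] [MeasurableSpace β]
    (μ ν : Measure α) [IsProbabilityMeasure μ] [IsProbabilityMeasure ν]
    (κ : Kernel α β) [IsMarkovKernel κ]
    (ε δ : ℝ) (hε : 0 ≤ ε) (hδ : 0 ≤ δ)
    (h : ∀ S : Set α, MeasurableSet S →
      μ S ≤ ENNReal.ofReal (Real.exp ε) * ν S + ENNReal.ofReal δ) :
    ∀ T : Set β, MeasurableSet T →
      (μ.bind fun x => κ x) T ≤
        ENNReal.ofReal (Real.exp ε) * ((ν.bind fun x => κ x) T) + ENNReal.ofReal δ := by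
  intro T hT
  set f : α → ℝ := fun x => ((κ x) T).toReal with hf
  have hfm : Measurable f := (κ.measurable_coe hT).ennreal_toReal
  have hf01 : ∀ x, 0 ≤ f x ∧ f x ≤ 1 := by
    intro x
    refine ⟨ENNReal.toReal_nonneg, ?_⟩
    have : (κ x) T ≤ 1 := prob_le_one
    simpa using ENNReal.toReal_mono (by norm_num) this
  have hof : ∀ x, ENNReal.ofReal (f x) = (κ x) T := by
    intro x
    exact ENNReal.ofReal_toReal (measure_ne_top _ _)
  -- layer cake for both measures
  have hset : ∀ t : ℝ, MeasurableSet {x | t ≤ f x} :=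
    fun t => measurableSet_le measurable_const hfm
  have hempty : ∀ t : ℝ, 1 < t → {x : α | t ≤ f x} = ∅ := by
    intro t ht
    ext x
    simp only [Set.mem_setOf_eq, Set.mem_empty_iff_false, iff_false, not_le]
    exact lt_of_le_of_lt (hf01 x).2 ht
  have layer : ∀ (m : Measure α),
      ∫⁻ x, (κ x) T ∂m = ∫⁻ t in Set.Ioc (0:ℝ) 1, m {x | t ≤ f x} := by
    intro m
    have h1 : ∫⁻ x, (κ x) T ∂m = ∫⁻ x, ENNReal.ofReal (f x) ∂m := by
      simp_rw [hof]
    rw [h1, lintegral_eq_lintegral_meas_le m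
      (Filter.Eventually.of_forall fun x => (hf01 x).1) hfm.aemeasurable]
    have : Set.Ioi (0:ℝ) = Set.Ioc (0:ℝ) 1 ∪ Set.Ioi 1 := by
      rw [Set.Ioc_union_Ioi_eq_Ioi]; norm_num
    rw [this, lintegral_union measurableSet_Ioi (by
      rw [Set.disjoint_iff]; rintro t ⟨⟨_, h1⟩, h2⟩; exact absurd h2 (not_lt.2 h1))]
    have hz : ∫⁻ t in Set.Ioi (1:ℝ), m {x | t ≤ f x} = 0 := by
      rw [setLIntegral_congr_fun measurableSet_Ioi
        ((fun t ht => by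
          show m {x | t ≤ f x} = 0
          rw [hempty t ht]; simp))]
      simp
    rw [hz, add_zero]
  rw [Measure.bind_apply hT (Kernel.measurable κ).aemeasurable,
    Measure.bind_apply hT (Kernel.measurable κ).aemeasurable, layer μ, layer ν]
  calc ∫⁻ t in Set.Ioc (0:ℝ) 1, μ {x | t ≤ f x}
      ≤ ∫⁻ t in Set.Ioc (0:ℝ) 1,
          (ENNReal.ofReal (Real.exp ε) * ν {x | t ≤ f x} + ENNReal.ofReal δ) :=
        lintegral_mono fun t => h _ (hset t)
    _ = ENNReal.ofReal (Real.exp ε) * (∫⁻ t in Set.Ioc (0:ℝ) 1, ν {x | t ≤ f x})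
          + ENNReal.ofReal δ * (volume.restrict (Set.Ioc (0:ℝ) 1)) Set.univ := by
        rw [lintegral_add_right _ measurable_const,
          lintegral_const_mul' _ _ ENNReal.ofReal_ne_top, lintegral_const]
    _ ≤ ENNReal.ofReal (Real.exp ε) * (∫⁻ t in Set.Ioc (0:ℝ) 1, ν {x | t ≤ f x})
          + ENNReal.ofReal δ := by
        rw [Measure.restrict_apply_univ, Real.volume_Ioc]
        gcongr
        simpa using ENNReal.ofReal_le_one.2 le_rfl
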